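/- arXiv:1805.05273 — 2 statements merged into one kernel-verified Lean document; each statement's English description precedes it below -/
import Mathlib

section
/- Let n_1, …, n_m be integers with each n_i ≥ 2 and let G = K_{n_1} × ⋯ × K_{n_m} be the Hamming graph H_{n_1,…,n_m}. Then M_N(G) = (∏_{i=1}^m n_i)·[∑_i (n_i−1)^4 + 3·∑_{(i,j): i≠j} (n_i−1)^2(n_j−1)^2 + 6·∑_{(i,j,k) pairwise distinct} (n_i−1)^2(n_j−1)(n_k−1) + 4·∑_{(i,j): i≠j} (n_i−1)^3(n_j−1) + ∑_{(i,j,k,l) pairwise distinct} (n_i−1)(n_j−1)(n_k−1)(n_l−1)], where each multiple sum runs over ordered tuples of pairwise distinct indices; equivalently M_N(G) = (∏_i n_i)·(∑_i (n_i−1))^4. -/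
open Finset
open scoped Classical

/-- Sum of degrees of the neighbours of a vertex: `δ_G(v) = ∑_{u ∈ N_G(v)} deg_G(u)`. -/
noncomputable def neighborDegSum {V : Type*} [Fintype V] (G : SimpleGraph V) (v : V) : ℕ :=
  ∑ u ∈ G.neighborFinset v, G.degree u

/-- The first Zagreb index `M₁(G) = ∑_{v ∈ V(G)} deg_G(v)²`. -/
noncomputable def firstZagreb {V : Type*} [Fintype V] (G : SimpleGraph V) : ℕ :=
  ∑ v, (G.degree v) ^ 2

/-- The second Zagreb index `M₂(G) = ∑_{uv ∈ E(G)} deg_G(u)·deg_G(v)`. -/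
noncomputable def secondZagreb {V : Type*} [Fintype V] (G : SimpleGraph V) : ℕ :=
  ∑ e ∈ G.edgeFinset,
    Sym2.lift ⟨fun u w => G.degree u * G.degree w, fun _ _ => mul_comm _ _⟩ e

/-- The Neighbourhood Zagreb index `M_N(G) = ∑_{v ∈ V(G)} δ_G(v)²`. -/
noncomputable def neighborhoodZagreb {V : Type*} [Fintype V] (G : SimpleGraph V) : ℕ :=
  ∑ v, (neighborDegSum G v) ^ 2

/-- The `n`-fold Cartesian (box) product `G₁ × ⋯ × Gₙ`: vertices are tuples, and two
tuples are adjacent iff they are adjacent in exactly one coordinate and equal elsewhere. -/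
def boxProdPi {n : ℕ} {V : Fin n → Type*} (G : ∀ i, SimpleGraph (V i)) :
    SimpleGraph (∀ i, V i) where
  Adj a b := ∃ i, (G i).Adj (a i) (b i) ∧ ∀ j, j ≠ i → a j = b j
  symm := ⟨by
    rintro a b ⟨i, hi, hj⟩
    exact ⟨i, (G i).symm.symm _ _ hi, fun j hji => (hj j hji).symm⟩⟩
  loopless := ⟨by
    rintro a ⟨i, hi, -⟩
    exact (G i).loopless.irrefl _ hi⟩

/-- The Hamming graph `H_{n₁,…,n_m} = K_{n₁} × ⋯ × K_{n_m}`. -/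
def hammingGraph {m : ℕ} (f : Fin m → ℕ) : SimpleGraph (∀ i, Fin (f i)) :=
  boxProdPi (fun i => SimpleGraph.completeGraph (Fin (f i)))

/-- Every vertex of the Hamming graph has degree `∑ i, (f i - 1)`. -/
lemma degree_hammingGraph {m : ℕ} (f : Fin m → ℕ) (v : ∀ i, Fin (f i)) :
    (hammingGraph f).degree v = ∑ i, (f i - 1) := by
  classical
  rw [← SimpleGraph.card_neighborSet_eq_degree]
  have e : (Σ i : Fin m, {x : Fin (f i) // x ≠ v i}) ≃ ((hammingGraph f).neighborSet v) := by
    refine Equiv.ofBijective (fun p => ⟨Function.update v p.1 p.2.1, p.1, ?_, ?_⟩) ⟨?_, ?_⟩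
    · show v p.1 ≠ Function.update v p.1 p.2.1 p.1
      rw [Function.update_self]
      exact (p.2.2).symm
    · intro j hj
      rw [Function.update_of_ne hj]
    · rintro ⟨i, x, hx⟩ ⟨i', x', hx'⟩ h
      simp only [Subtype.mk.injEq] at h
      have hii' : i = i' := by
        by_contra hne
        have : Function.update v i x i' = Function.update v i' x' i' :=
          congrFun (congrArg Subtype.val h) i'
        rw [Function.update_of_ne (Ne.symm hne), Function.update_self] at this
        exact hx' this.symm
      subst hii'
      have : Function.update v i x i = Function.update v i x' i :=
        congrFun (congrArg Subtype.val h) i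
      rw [Function.update_self, Function.update_self] at this
      simp [this]
    · rintro ⟨u, hu⟩
      obtain ⟨i, hadj, heq⟩ := hu
      have hne : v i ≠ u i := hadj
      refine ⟨⟨i, u i, Ne.symm hne⟩, ?_⟩
      have : Function.update v i (u i) = u := by
        funext j
        by_cases hj : j = i
        · subst hj; simp
        · rw [Function.update_of_ne hj]; exact heq j hj
      exact Subtype.ext this
  rw [← Fintype.card_congr e, Fintype.card_sigma]
  refine sum_congr rfl fun i _ => ?_
  rw [Fintype.card_subtype_compl, Fintype.card_fin, Fintype.card_subtype_eq]

lemma sum_poly_aux {m : ℕ} (A : Fin m → ℤ) (b c d e : ℤ) :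
    ∑ i, (b * A i + c * A i ^ 2 + d * A i ^ 3 + e * A i ^ 4) =
      b * ∑ i, A i + c * ∑ i, A i ^ 2 + d * ∑ i, A i ^ 3 + e * ∑ i, A i ^ 4 := by
  simp [Finset.sum_add_distrib, Finset.mul_sum]

/-- Multinomial expansion of a fourth power of a sum. -/
lemma expand4_aux {m : ℕ} (A : Fin m → ℤ) :
    ∑ i, A i ^ 4 +
      3 * ∑ i, ∑ j ∈ univ.erase i, A i ^ 2 * A j ^ 2 +
      6 * ∑ i, ∑ j ∈ univ.erase i, ∑ k ∈ (univ.erase i).erase j, A i ^ 2 * A j * A k +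
      4 * ∑ i, ∑ j ∈ univ.erase i, A i ^ 3 * A j +
      ∑ i, ∑ j ∈ univ.erase i, ∑ k ∈ (univ.erase i).erase j,
        ∑ l ∈ ((univ.erase i).erase j).erase k, A i * A j * A k * A l
    = (∑ i, A i) ^ 4 := by
  set p := ∑ i, A i with hp
  set q := ∑ i, A i ^ 2 with hq
  set r := ∑ i, A i ^ 3 with hr
  set s := ∑ i, A i ^ 4 with hs
  have h2 : ∑ i, ∑ j ∈ univ.erase i, A i ^ 2 * A j ^ 2 = q * q - s := by
    have : ∀ i ∈ (univ : Finset (Fin m)), ∑ j ∈ univ.erase i, A i ^ 2 * A j ^ 2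
        = 0 * A i + (q : ℤ) * A i ^ 2 + 0 * A i ^ 3 + (-1) * A i ^ 4 := by
      intro i _
      rw [← Finset.mul_sum, Finset.sum_erase_eq_sub (mem_univ i), ← hq]
      ring
    rw [Finset.sum_congr rfl this, sum_poly_aux, ← hq, ← hs]; ring
  have h4 : ∑ i, ∑ j ∈ univ.erase i, A i ^ 3 * A j = r * p - s := by
    have : ∀ i ∈ (univ : Finset (Fin m)), ∑ j ∈ univ.erase i, A i ^ 3 * A j
        = 0 * A i + 0 * A i ^ 2 + (p : ℤ) * A i ^ 3 + (-1) * A i ^ 4 := by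
      intro i _
      rw [← Finset.mul_sum, Finset.sum_erase_eq_sub (mem_univ i), ← hp]
      ring
    rw [Finset.sum_congr rfl this, sum_poly_aux, ← hr, ← hs]; ring
  have h3 : ∑ i, ∑ j ∈ univ.erase i, ∑ k ∈ (univ.erase i).erase j, A i ^ 2 * A j * A k
      = p * p * q - 2 * p * r + 2 * s - q * q := by
    have step1 : ∀ i ∈ (univ : Finset (Fin m)),
        ∑ j ∈ univ.erase i, ∑ k ∈ (univ.erase i).erase j, A i ^ 2 * A j * A k
        = 0 * A i + (p * p - q) * A i ^ 2 + (-2 * p) * A i ^ 3 + 2 * A i ^ 4 := by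
      intro i _
      have inner : ∀ j ∈ univ.erase i, ∑ k ∈ (univ.erase i).erase j, A i ^ 2 * A j * A k
          = A i ^ 2 * (p - A i) * A j - A i ^ 2 * A j ^ 2 := by
        intro j hj
        rw [← Finset.mul_sum, Finset.sum_erase_eq_sub hj,
          Finset.sum_erase_eq_sub (mem_univ i), ← hp]
        ring
      rw [Finset.sum_congr rfl inner, Finset.sum_sub_distrib, ← Finset.mul_sum, ← Finset.mul_sum,
        Finset.sum_erase_eq_sub (mem_univ i), Finset.sum_erase_eq_sub (mem_univ i), ← hp, ← hq]
      ring
    rw [Finset.sum_congr rfl step1, sum_poly_aux, ← hq, ← hr, ← hs]; ring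
  have h5 : ∑ i, ∑ j ∈ univ.erase i, ∑ k ∈ (univ.erase i).erase j,
        ∑ l ∈ ((univ.erase i).erase j).erase k, A i * A j * A k * A l
      = p ^ 4 - 6 * p ^ 2 * q + 8 * p * r + 3 * q ^ 2 - 6 * s := by
    have step1 : ∀ i ∈ (univ : Finset (Fin m)),
        ∑ j ∈ univ.erase i, ∑ k ∈ (univ.erase i).erase j,
          ∑ l ∈ ((univ.erase i).erase j).erase k, A i * A j * A k * A l
        = (p ^ 3 - 3 * p * q + 2 * r) * A i + (3 * q - 3 * p ^ 2) * A i ^ 2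
            + (6 * p) * A i ^ 3 + (-6) * A i ^ 4 := by
      intro i _
      have inner2 : ∀ j ∈ univ.erase i,
          ∑ k ∈ (univ.erase i).erase j, ∑ l ∈ ((univ.erase i).erase j).erase k,
            A i * A j * A k * A l
          = (A i * ((p - A i) ^ 2 - q + A i ^ 2)) * A j
              - (2 * A i * (p - A i)) * A j ^ 2 + (2 * A i) * A j ^ 3 := by
        intro j hj
        have inner1 : ∀ k ∈ (univ.erase i).erase j,
            ∑ l ∈ ((univ.erase i).erase j).erase k, A i * A j * A k * A l
            = (A i * A j * (p - A i - A j)) * A k - (A i * A j) * A k ^ 2 := by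
          intro k hk
          rw [← Finset.mul_sum, Finset.sum_erase_eq_sub hk, Finset.sum_erase_eq_sub hj,
            Finset.sum_erase_eq_sub (mem_univ i), ← hp]
          ring
        rw [Finset.sum_congr rfl inner1, Finset.sum_sub_distrib, ← Finset.mul_sum,
          ← Finset.mul_sum, Finset.sum_erase_eq_sub hj, Finset.sum_erase_eq_sub hj,
          Finset.sum_erase_eq_sub (mem_univ i), Finset.sum_erase_eq_sub (mem_univ i),
          ← hp, ← hq]
        ring
      rw [Finset.sum_congr rfl inner2]
      rw [Finset.sum_add_distrib, Finset.sum_sub_distrib, ← Finset.mul_sum, ← Finset.mul_sum,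
        ← Finset.mul_sum, Finset.sum_erase_eq_sub (mem_univ i),
        Finset.sum_erase_eq_sub (mem_univ i), Finset.sum_erase_eq_sub (mem_univ i),
        ← hp, ← hq, ← hr]
      ring
    rw [Finset.sum_congr rfl step1, sum_poly_aux, ← hp, ← hq, ← hr, ← hs]; ring
  rw [h2, h3, h4, h5]; ring

theorem neighborhoodZagreb_hammingGraph {m : ℕ} (f : Fin m → ℕ) (hf : ∀ i, 2 ≤ f i) :
    (neighborhoodZagreb (hammingGraph f) : ℤ) =
      (∏ i, (f i : ℤ)) *
        (∑ i, ((f i : ℤ) - 1) ^ 4 +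
          3 * ∑ i, ∑ j ∈ univ.erase i, ((f i : ℤ) - 1) ^ 2 * ((f j : ℤ) - 1) ^ 2 +
          6 * ∑ i, ∑ j ∈ univ.erase i, ∑ k ∈ (univ.erase i).erase j,
            ((f i : ℤ) - 1) ^ 2 * ((f j : ℤ) - 1) * ((f k : ℤ) - 1) +
          4 * ∑ i, ∑ j ∈ univ.erase i, ((f i : ℤ) - 1) ^ 3 * ((f j : ℤ) - 1) +
          ∑ i, ∑ j ∈ univ.erase i, ∑ k ∈ (univ.erase i).erase j,
            ∑ l ∈ ((univ.erase i).erase j).erase k,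
            ((f i : ℤ) - 1) * ((f j : ℤ) - 1) * ((f k : ℤ) - 1) * ((f l : ℤ) - 1)) ∧
    (neighborhoodZagreb (hammingGraph f) : ℤ) =
      (∏ i, (f i : ℤ)) * (∑ i, ((f i : ℤ) - 1)) ^ 4 := by
  classical
  set d : ℕ := ∑ i, (f i - 1) with hd
  have hδ : ∀ v, neighborDegSum (hammingGraph f) v = d * d := by
    intro v
    unfold neighborDegSum
    rw [Finset.sum_congr rfl fun u _ => degree_hammingGraph f u, Finset.sum_const,
      smul_eq_mul]
    congr 1
    exact degree_hammingGraph f v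
  have hMN : neighborhoodZagreb (hammingGraph f) = (∏ i, f i) * d ^ 4 := by
    unfold neighborhoodZagreb
    rw [Finset.sum_congr rfl fun v _ => by rw [hδ v], Finset.sum_const, smul_eq_mul]
    rw [Finset.card_univ, Fintype.card_pi]
    rw [show (d * d) ^ 2 = d ^ 4 by ring]
    simp [Fintype.card_fin]
  have hdcast : (d : ℤ) = ∑ i, ((f i : ℤ) - 1) := by
    rw [hd, Nat.cast_sum]
    refine sum_congr rfl fun i _ => ?_
    have : 1 ≤ f i := le_trans (by norm_num) (hf i)
    push_cast [Nat.cast_sub this]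
    ring
  have hsecond : (neighborhoodZagreb (hammingGraph f) : ℤ) =
      (∏ i, (f i : ℤ)) * (∑ i, ((f i : ℤ) - 1)) ^ 4 := by
    rw [hMN]
    push_cast
    rw [hdcast]
  refine ⟨?_, hsecond⟩
  rw [hsecond, expand4_aux (fun i => ((f i : ℤ) - 1))]
end

section
/- For finite simple graphs G_1 and G_2, the Neighbourhood Zagreb index of their wreath product satisfies M_N(G_1[G_2]) = |V_2|^5·M_N(G_1) + |V_1|·M_N(G_2) + 12|V_2|·|E_2|^2·M_1(G_1) + 8|E_1|·|E_2|·M_1(G_2) + 16|V_2|^3·|E_2|·M_2(G_1) + 8|V_2|·|E_1|·M_2(G_2) + 3|V_2|^2·M_1(G_1)·M_1(G_2). -/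
open Finset
open scoped Classical

/-- The wreath product (composition) `G₁[G₂]`: `(u₁,v₁)` adjacent to `(u₂,v₂)` iff
`u₁u₂ ∈ E₁`, or (`u₁ = u₂` and `v₁v₂ ∈ E₂`). -/
def wreathProd {V W : Type*} (G₁ : SimpleGraph V) (G₂ : SimpleGraph W) :
    SimpleGraph (V × W) where
  Adj x y := G₁.Adj x.1 y.1 ∨ (x.1 = y.1 ∧ G₂.Adj x.2 y.2)
  symm := by
    constructor
    rintro x y (h | ⟨h, h'⟩)
    · exact Or.inl (G₁.adj_symm h)
    · exact Or.inr ⟨h.symm, G₂.adj_symm h'⟩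
  loopless := by
    constructor
    rintro x (h | ⟨-, h⟩)
    · exact G₁.loopless.irrefl _ h
    · exact G₂.loopless.irrefl _ h

section aux
variable {V : Type*} [Fintype V] (G : SimpleGraph V)

lemma dart_sum (f : Sym2 V → ℕ) : ∑ d : G.Dart, f d.edge = 2 * ∑ e ∈ G.edgeFinset, f e := by
  classical
  rw [← Finset.sum_fiberwise_of_maps_to (g := SimpleGraph.Dart.edge) (t := G.edgeFinset)
      (fun d _ => by simp [SimpleGraph.Dart.edge_mem]) (fun d => f d.edge), Finset.mul_sum]
  refine Finset.sum_congr rfl fun e he => ?_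
  rw [Finset.sum_congr rfl (fun d hd => by rw [(Finset.mem_filter.mp hd).2]),
    Finset.sum_const, smul_eq_mul,
    G.dart_edge_fiber_card e (by simpa using he)]

lemma dart_sum_pairs (f : V → V → ℕ) :
    ∑ d : G.Dart, f d.fst d.snd = ∑ v, ∑ w ∈ G.neighborFinset v, f v w := by
  classical
  rw [← Finset.sum_fiberwise_of_maps_to (g := fun d : G.Dart => d.fst) (t := univ)
      (fun d _ => mem_univ _) (fun d => f d.fst d.snd)]
  refine Finset.sum_congr rfl fun v _ => ?_
  rw [show ({d : G.Dart | d.fst = v} : Finset _) = univ.image (G.dartOfNeighborSet v) from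
      G.dart_fst_fiber v,
    Finset.sum_image (fun _ _ _ _ h => G.dartOfNeighborSet_injective v h)]
  exact Finset.sum_set_coe (f := fun w => f v w) (s := G.neighborSet v)

lemma sum_neighborDegSum : ∑ v, neighborDegSum G v = firstZagreb G := by
  classical
  unfold neighborDegSum firstZagreb
  rw [← dart_sum_pairs G (fun _ w => G.degree w)]
  have h1 : (∑ v, (G.degree v)^2) = ∑ v, ∑ w ∈ G.neighborFinset v, G.degree v := by
    refine Finset.sum_congr rfl fun v _ => ?_
    rw [Finset.sum_const, SimpleGraph.card_neighborFinset_eq_degree, smul_eq_mul, sq]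
  rw [h1, ← dart_sum_pairs G (fun v _ => G.degree v)]
  rw [← Function.Bijective.sum_comp (SimpleGraph.Dart.symm_involutive (G := G)).bijective
    (fun d => G.degree d.fst)]
  rfl

lemma sum_deg_mul_neighborDegSum :
    ∑ v, G.degree v * neighborDegSum G v = 2 * secondZagreb G := by
  classical
  unfold neighborDegSum secondZagreb
  conv_lhs => simp only [Finset.mul_sum]
  rw [← dart_sum_pairs G (fun v w => G.degree v * G.degree w), ← dart_sum]
  exact Finset.sum_congr rfl fun d _ => rfl

end aux

section algebra
variable {α : Type*}

lemma sum_sq_expand (s : Finset α) (A B : ℕ) (g h : α → ℕ) :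
    ∑ x ∈ s, (A + B * g x + h x)^2 =
      s.card * A^2 + B^2 * (∑ x ∈ s, (g x)^2) + (∑ x ∈ s, (h x)^2)
      + 2*A*B*(∑ x ∈ s, g x) + 2*A*(∑ x ∈ s, h x) + 2*B*(∑ x ∈ s, g x * h x) := by
  have hx : ∀ x, (A + B * g x + h x)^2
      = A^2 + B^2*(g x)^2 + (h x)^2 + 2*A*B*(g x) + 2*A*(h x) + 2*B*(g x * h x) :=
    fun x => by ring
  simp only [hx, Finset.sum_add_distrib, ← Finset.mul_sum, Finset.sum_const, smul_eq_mul]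

lemma sum_lin (s : Finset α) (c1 c2 c3 c4 c5 c0 : ℕ) (a b : α → ℕ) :
    ∑ x ∈ s, (c1*(a x)^2 + c2*(b x)^2 + c3*(b x * a x) + c4*(a x) + c5*(b x) + c0)
    = c1*(∑ x ∈ s, (a x)^2) + c2*(∑ x ∈ s, (b x)^2) + c3*(∑ x ∈ s, b x * a x)
      + c4*(∑ x ∈ s, a x) + c5*(∑ x ∈ s, b x) + s.card * c0 := by
  simp only [Finset.sum_add_distrib, ← Finset.mul_sum, Finset.sum_const, smul_eq_mul]

end algebra

section wreath
variable {V W : Type*} [Fintype V] [Fintype W] (G₁ : SimpleGraph V) (G₂ : SimpleGraph W)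

lemma wreath_adj (x y : V × W) : (wreathProd G₁ G₂).Adj x y ↔
    G₁.Adj x.1 y.1 ∨ (x.1 = y.1 ∧ G₂.Adj x.2 y.2) := Iff.rfl

lemma wreath_neighborFinset (u : V) (v : W) :
    (wreathProd G₁ G₂).neighborFinset (u, v) =
      (G₁.neighborFinset u ×ˢ univ) ∪ ({u} ×ˢ G₂.neighborFinset v) := by
  ext ⟨a, b⟩
  simp only [SimpleGraph.mem_neighborFinset, wreath_adj, Finset.mem_union, Finset.mem_product,
    Finset.mem_singleton, Finset.mem_univ, and_true, SimpleGraph.mem_neighborFinset]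
  tauto

lemma wreath_disj (u : V) (v : W) :
    Disjoint (G₁.neighborFinset u ×ˢ (univ : Finset W)) ({u} ×ˢ G₂.neighborFinset v) := by
  rw [Finset.disjoint_left]
  rintro ⟨a, b⟩ h h'
  simp only [Finset.mem_product, Finset.mem_singleton, SimpleGraph.mem_neighborFinset] at h h'
  exact G₁.loopless.irrefl u (h'.1 ▸ h.1)

lemma wreath_degree (u : V) (v : W) :
    (wreathProd G₁ G₂).degree (u, v) = Fintype.card W * G₁.degree u + G₂.degree v := by
  rw [← SimpleGraph.card_neighborFinset_eq_degree, wreath_neighborFinset,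
    Finset.card_union_of_disjoint (wreath_disj G₁ G₂ u v)]
  simp [mul_comm, ← SimpleGraph.card_neighborFinset_eq_degree]

lemma wreath_nds (u : V) (v : W) :
    neighborDegSum (wreathProd G₁ G₂) (u, v) =
      (Fintype.card W)^2 * neighborDegSum G₁ u
      + (2 * G₂.edgeFinset.card) * G₁.degree u
      + (Fintype.card W * G₁.degree u) * G₂.degree v
      + neighborDegSum G₂ v := by
  classical
  unfold neighborDegSum
  rw [wreath_neighborFinset, Finset.sum_union (wreath_disj G₁ G₂ u v),
    Finset.sum_product, Finset.sum_product]
  have h1 : ∀ x ∈ G₁.neighborFinset u, ∑ y : W, (wreathProd G₁ G₂).degree (x, y)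
      = (Fintype.card W)^2 * G₁.degree x + 2 * G₂.edgeFinset.card := by
    intro x _
    simp_rw [wreath_degree]
    rw [Finset.sum_add_distrib, Finset.sum_const, smul_eq_mul, Finset.card_univ,
      G₂.sum_degrees_eq_twice_card_edges]
    ring
  rw [Finset.sum_congr rfl h1, Finset.sum_add_distrib, Finset.sum_const, smul_eq_mul,
    ← Finset.mul_sum, Finset.sum_singleton]
  have h2 : ∑ y ∈ G₂.neighborFinset v, (wreathProd G₁ G₂).degree (u, y)
      = G₂.degree v * (Fintype.card W * G₁.degree u) + neighborDegSum G₂ v := by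
    simp_rw [wreath_degree]
    rw [Finset.sum_add_distrib, Finset.sum_const, smul_eq_mul,
      SimpleGraph.card_neighborFinset_eq_degree]
    rfl
  rw [h2, SimpleGraph.card_neighborFinset_eq_degree]
  unfold neighborDegSum
  ring

end wreath

theorem neighborhoodZagreb_wreathProd {V W : Type*} [Fintype V] [Fintype W]
    (G₁ : SimpleGraph V) (G₂ : SimpleGraph W) :
    neighborhoodZagreb (wreathProd G₁ G₂) =
      (Fintype.card W) ^ 5 * neighborhoodZagreb G₁ +
      Fintype.card V * neighborhoodZagreb G₂ +
      12 * Fintype.card W * G₂.edgeFinset.card ^ 2 * firstZagreb G₁ +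
      8 * G₁.edgeFinset.card * G₂.edgeFinset.card * firstZagreb G₂ +
      16 * (Fintype.card W) ^ 3 * G₂.edgeFinset.card * secondZagreb G₁ +
      8 * Fintype.card W * G₁.edgeFinset.card * secondZagreb G₂ +
      3 * (Fintype.card W) ^ 2 * firstZagreb G₁ * firstZagreb G₂ := by
  classical
  set n := Fintype.card W with hn
  set k := 2 * G₂.edgeFinset.card with hk
  have Se : ∑ v, G₂.degree v = k := G₂.sum_degrees_eq_twice_card_edges
  have Sc : ∑ v, neighborDegSum G₂ v = firstZagreb G₂ := sum_neighborDegSum G₂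
  have Sce : ∑ v, G₂.degree v * neighborDegSum G₂ v = 2 * secondZagreb G₂ :=
    sum_deg_mul_neighborDegSum G₂
  have Sa : ∑ u, neighborDegSum G₁ u = firstZagreb G₁ := sum_neighborDegSum G₁
  have Sb : ∑ u, G₁.degree u = 2 * G₁.edgeFinset.card := G₁.sum_degrees_eq_twice_card_edges
  have Sab : ∑ u, G₁.degree u * neighborDegSum G₁ u = 2 * secondZagreb G₁ :=
    sum_deg_mul_neighborDegSum G₁
  have step1 : neighborhoodZagreb (wreathProd G₁ G₂)
      = ∑ u, ∑ v, ((n^2 * neighborDegSum G₁ u + k * G₁.degree u)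
          + (n * G₁.degree u) * G₂.degree v + neighborDegSum G₂ v)^2 := by
    unfold neighborhoodZagreb
    rw [Fintype.sum_prod_type]
    refine Finset.sum_congr rfl fun u _ => Finset.sum_congr rfl fun v _ => ?_
    rw [wreath_nds]
  rw [step1]
  have step2 : ∀ u : V, ∑ v, ((n^2 * neighborDegSum G₁ u + k * G₁.degree u)
          + (n * G₁.degree u) * G₂.degree v + neighborDegSum G₂ v)^2
      = n * (n^2 * neighborDegSum G₁ u + k * G₁.degree u)^2
        + (n * G₁.degree u)^2 * firstZagreb G₂ + neighborhoodZagreb G₂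
        + 2*(n^2 * neighborDegSum G₁ u + k * G₁.degree u)*(n * G₁.degree u)*k
        + 2*(n^2 * neighborDegSum G₁ u + k * G₁.degree u)*(firstZagreb G₂)
        + 2*(n * G₁.degree u)*(2 * secondZagreb G₂) := by
    intro u
    rw [sum_sq_expand univ _ _ (fun v => G₂.degree v) (neighborDegSum G₂), Finset.card_univ,
      Se, Sc, Sce]
    rfl
  simp_rw [step2]
  have step3 : ∀ u : V,
      n * (n^2 * neighborDegSum G₁ u + k * G₁.degree u)^2
        + (n * G₁.degree u)^2 * firstZagreb G₂ + neighborhoodZagreb G₂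
        + 2*(n^2 * neighborDegSum G₁ u + k * G₁.degree u)*(n * G₁.degree u)*k
        + 2*(n^2 * neighborDegSum G₁ u + k * G₁.degree u)*(firstZagreb G₂)
        + 2*(n * G₁.degree u)*(2 * secondZagreb G₂)
      = n^5 * (neighborDegSum G₁ u)^2
        + (n*k^2 + n^2 * firstZagreb G₂ + 2*n*k*k) * (G₁.degree u)^2
        + (2*n^3*k + 2*n^3*k) * (G₁.degree u * neighborDegSum G₁ u)
        + (2*n^2*firstZagreb G₂) * (neighborDegSum G₁ u)
        + (2*k*firstZagreb G₂ + 4*n*secondZagreb G₂) * (G₁.degree u)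
        + neighborhoodZagreb G₂ := fun u => by ring
  simp_rw [step3]
  rw [sum_lin univ _ _ _ _ _ _ (neighborDegSum G₁) (fun u => G₁.degree u)]
  have e1 : ∑ u, (neighborDegSum G₁ u)^2 = neighborhoodZagreb G₁ := rfl
  have e2 : ∑ u, (G₁.degree u)^2 = firstZagreb G₁ := rfl
  rw [e1, e2, Sab, Sa, Sb, Finset.card_univ]
  ring
end
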